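/- For a real number x ≥ 0, the series ∑_{n≥1} g_n * x^n is summable if and only if x ≤ 27/256. In particular the radius of convergence of the power series ∑_{n≥1} g_n x^n equals 27/256 and the series converges at its radius of convergence. -/

import Mathlib

/-- `gseq n` is the number `g_n = 2·(4n+1)!/((n+1)!·(3n+2)!)` of rooted 3-connected
planar triangulations with `2n+2` faces (as a real number), with `g_0 = 0`. -/
noncomputable def gseq (n : ℕ) : ℝ :=
  if n = 0 then 0
  else 2 * (Nat.factorial (4 * n + 1)) / ((Nat.factorial (n + 1)) * (Nat.factorial (3 * n + 2)))

lemma gseq_nonneg (n : ℕ) : 0 ≤ gseq n := by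
  unfold gseq; split
  · simp_all
  · positivity

lemma gseq_one : gseq 1 = 1 := by
  unfold gseq
  norm_num [Nat.factorial]

/-- Cleared-denominator recurrence for `gseq`. -/
lemma gseq_succ (n : ℕ) (hn : n ≠ 0) :
    gseq (n + 1) * (((n : ℝ) + 2) * (3 * n + 3) * (3 * n + 4) * (3 * n + 5))
      = gseq n * ((4 * (n : ℝ) + 2) * (4 * n + 3) * (4 * n + 4) * (4 * n + 5)) := by
  unfold gseq
  rw [if_neg (Nat.succ_ne_zero n), if_neg hn]
  have e1 : 4 * (n + 1) + 1 = (4 * n + 1) + 1 + 1 + 1 + 1 := by ring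
  have e3 : 3 * (n + 1) + 2 = (3 * n + 2) + 1 + 1 + 1 := by ring
  have e2 : (n + 1) + 1 = (n + 1) + 1 := rfl
  rw [e1, e3]
  simp only [Nat.factorial_succ]
  have hf1 : (0 : ℝ) < (Nat.factorial (n + 1) : ℝ) := by exact_mod_cast (n + 1).factorial_pos
  have hf2 : (0 : ℝ) < (Nat.factorial (3 * n + 2) : ℝ) := by
    exact_mod_cast (3 * n + 2).factorial_pos
  push_cast
  field_simp
  ring

/-- Upper bound at the radius of convergence: `g_n (27/256)^n (n+1)² ≤ 27/64`. -/
lemma gseq_upper : ∀ n : ℕ, 1 ≤ n → gseq n * (27 / 256) ^ n * ((n : ℝ) + 1) ^ 2 ≤ 27 / 64 := by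
  intro n hn
  induction n with
  | zero => omega
  | succ m ih =>
    rcases Nat.eq_or_lt_of_le hn with h1 | h1
    · have hm : m = 0 := by omega
      subst hm
      rw [gseq_one]
      norm_num
    · have hm : 1 ≤ m := by omega
      have IH := ih hm
      have hm0 : m ≠ 0 := by omega
      have hrec := gseq_succ m hm0
      set D : ℝ := ((m : ℝ) + 2) * (3 * m + 3) * (3 * m + 4) * (3 * m + 5) with hD
      set R : ℝ := (4 * (m : ℝ) + 2) * (4 * m + 3) * (4 * m + 4) * (4 * m + 5) with hR
      have hDpos : 0 < D := by have : (0:ℝ) ≤ (m:ℝ) := Nat.cast_nonneg m; positivity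
      -- polynomial inequality : 27 R (m+2)² + nonneg = 256 D (m+1)²
      have hpoly : 27 * R * ((m : ℝ) + 2) ^ 2 ≤ 256 * D * ((m : ℝ) + 1) ^ 2 := by
        have hkey : 256 * D * ((m : ℝ) + 1) ^ 2
            = 27 * R * ((m : ℝ) + 2) ^ 2 + (17760 + 69504 * (m : ℝ) + 104760 * (m : ℝ) ^ 2
              + 75720 * (m : ℝ) ^ 3 + 26160 * (m : ℝ) ^ 4 + 3456 * (m : ℝ) ^ 5) := by
          rw [hD, hR]; ring
        have hmn : (0:ℝ) ≤ (m:ℝ) := Nat.cast_nonneg m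
        nlinarith [pow_nonneg hmn 2, pow_nonneg hmn 3, pow_nonneg hmn 4, pow_nonneg hmn 5]
      have hA : 0 ≤ gseq m * (27 / 256) ^ m := by
        have := gseq_nonneg m; positivity
      have hgoalD : gseq (m + 1) * (27 / 256) ^ (m + 1) * ((m : ℝ) + 2) ^ 2 * D
          ≤ 27 / 64 * D := by
        have e : gseq (m + 1) * (27 / 256) ^ (m + 1) * ((m : ℝ) + 2) ^ 2 * D
            = (gseq m * (27 / 256) ^ m) * ((27 / 256) * R * ((m : ℝ) + 2) ^ 2) := by
          have : gseq (m + 1) * D = gseq m * R := hrec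
          calc gseq (m + 1) * (27 / 256) ^ (m + 1) * ((m : ℝ) + 2) ^ 2 * D
              = (gseq (m + 1) * D) * ((27 / 256) ^ m * (27 / 256) * ((m : ℝ) + 2) ^ 2) := by
                rw [pow_succ]; ring
            _ = (gseq m * R) * ((27 / 256) ^ m * (27 / 256) * ((m : ℝ) + 2) ^ 2) := by rw [this]
            _ = (gseq m * (27 / 256) ^ m) * ((27 / 256) * R * ((m : ℝ) + 2) ^ 2) := by ring
        rw [e]
        calc (gseq m * (27 / 256) ^ m) * ((27 / 256) * R * ((m : ℝ) + 2) ^ 2)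
            ≤ (gseq m * (27 / 256) ^ m) * (D * ((m : ℝ) + 1) ^ 2) := by
              apply mul_le_mul_of_nonneg_left _ hA
              linarith
          _ = (gseq m * (27 / 256) ^ m * ((m : ℝ) + 1) ^ 2) * D := by ring
          _ ≤ 27 / 64 * D := by
              apply mul_le_mul_of_nonneg_right IH (le_of_lt hDpos)
      have : gseq (m + 1) * (27 / 256) ^ (m + 1) * ((m : ℝ) + 2) ^ 2 ≤ 27 / 64 :=
        (mul_le_mul_iff_of_pos_right hDpos).mp hgoalD
      convert this using 3
      push_cast
      ring

/-- Lower bound beyond the radius: `x q^(n-1) ≤ g_n x^n n³` where `q = 256 x/27`. -/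
lemma gseq_lower (x : ℝ) (hx : 0 ≤ x) :
    ∀ n : ℕ, 1 ≤ n → x * (256 / 27 * x) ^ (n - 1) ≤ gseq n * x ^ n * (n : ℝ) ^ 3 := by
  intro n hn
  induction n with
  | zero => omega
  | succ m ih =>
    rcases Nat.eq_or_lt_of_le hn with h1 | h1
    · have hm : m = 0 := by omega
      subst hm
      rw [gseq_one]
      norm_num
    · have hm : 1 ≤ m := by omega
      have IH := ih hm
      have hm0 : m ≠ 0 := by omega
      have hrec := gseq_succ m hm0
      set D : ℝ := ((m : ℝ) + 2) * (3 * m + 3) * (3 * m + 4) * (3 * m + 5) with hD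
      set R : ℝ := (4 * (m : ℝ) + 2) * (4 * m + 3) * (4 * m + 4) * (4 * m + 5) with hR
      have hmn : (0:ℝ) ≤ (m:ℝ) := Nat.cast_nonneg m
      have hDpos : 0 < D := by positivity
      have hpoly : 256 * D * (m : ℝ) ^ 3 ≤ 27 * R * ((m : ℝ) + 1) ^ 3 := by
        have hkey : 27 * R * ((m : ℝ) + 1) ^ 3
            = 256 * D * (m : ℝ) ^ 3 + (3240 + 26352 * (m : ℝ) + 90288 * (m : ℝ) ^ 2
              + 138624 * (m : ℝ) ^ 3 + 100584 * (m : ℝ) ^ 4 + 32592 * (m : ℝ) ^ 5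
              + 3456 * (m : ℝ) ^ 6) := by
          rw [hD, hR]; ring
        nlinarith [pow_nonneg hmn 2, pow_nonneg hmn 3, pow_nonneg hmn 4, pow_nonneg hmn 5,
          pow_nonneg hmn 6]
      have hA : 0 ≤ gseq m * x ^ m := by
        have := gseq_nonneg m; positivity
      have hstepD : (x * (256 / 27 * x) ^ (m + 1 - 1)) * D
          ≤ gseq (m + 1) * x ^ (m + 1) * ((m : ℝ) + 1) ^ 3 * D := by
        have e : gseq (m + 1) * x ^ (m + 1) * ((m : ℝ) + 1) ^ 3 * D
            = (gseq m * x ^ m) * (x * R * ((m : ℝ) + 1) ^ 3) := by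
          calc gseq (m + 1) * x ^ (m + 1) * ((m : ℝ) + 1) ^ 3 * D
              = (gseq (m + 1) * D) * (x ^ m * x * ((m : ℝ) + 1) ^ 3) := by
                rw [pow_succ]; ring
            _ = (gseq m * R) * (x ^ m * x * ((m : ℝ) + 1) ^ 3) := by rw [hrec]
            _ = (gseq m * x ^ m) * (x * R * ((m : ℝ) + 1) ^ 3) := by ring
        rw [e]
        have step1 : (gseq m * x ^ m) * (x * (256 / 27) * D * (m : ℝ) ^ 3)
            ≤ (gseq m * x ^ m) * (x * R * ((m : ℝ) + 1) ^ 3) := by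
          apply mul_le_mul_of_nonneg_left _ hA
          nlinarith [hpoly, hx]
        have step2 : (x * (256 / 27 * x) ^ (m + 1 - 1)) * D
            ≤ (gseq m * x ^ m) * (x * (256 / 27) * D * (m : ℝ) ^ 3) := by
          have e2 : (x * (256 / 27 * x) ^ (m + 1 - 1)) * D
              = (x * (256 / 27 * x) ^ (m - 1)) * ((256 / 27) * x * D) := by
            have : m + 1 - 1 = (m - 1) + 1 := by omega
            rw [this, pow_succ]; ring
          have e3 : (gseq m * x ^ m) * (x * (256 / 27) * D * (m : ℝ) ^ 3)
              = (gseq m * x ^ m * (m : ℝ) ^ 3) * ((256 / 27) * x * D) := by ring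
          rw [e2, e3]
          apply mul_le_mul_of_nonneg_right IH
          positivity
        linarith
      have hfin : x * (256 / 27 * x) ^ (m + 1 - 1) ≤ gseq (m + 1) * x ^ (m + 1) * ((m : ℝ) + 1) ^ 3 :=
        le_of_mul_le_mul_right hstepD hDpos
      convert hfin using 2
      push_cast
      ring

/-- For `x ≥ 0`, the series `∑ g_n xⁿ` is summable iff `x ≤ 27/256`: the radius of
convergence is `27/256` and the series converges at its radius of convergence. -/
theorem stmt_1 (x : ℝ) (hx : 0 ≤ x) :
    Summable (fun n : ℕ => gseq n * x ^ n) ↔ x ≤ 27 / 256 := by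
  constructor
  · intro hsum
    by_contra hlt
    push_neg at hlt
    set q : ℝ := 256 / 27 * x with hq
    have hq1 : 1 < q := by rw [hq]; nlinarith
    have hxpos : 0 < x := by linarith
    have hc : Filter.Tendsto (fun n : ℕ => (n : ℝ) ^ 3 / q ^ n) Filter.atTop (nhds 0) :=
      tendsto_pow_const_div_const_pow_of_one_lt 3 hq1
    have hterm : Filter.Tendsto (fun n : ℕ => gseq n * x ^ n) Filter.atTop (nhds 0) :=
      hsum.tendsto_atTop_zero
    have hprod : Filter.Tendsto
        (fun n : ℕ => (gseq n * x ^ n) * ((n : ℝ) ^ 3 / q ^ n)) Filter.atTop (nhds 0) := by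
      simpa using hterm.mul hc
    have hev : ∀ᶠ n : ℕ in Filter.atTop,
        x / q ≤ (gseq n * x ^ n) * ((n : ℝ) ^ 3 / q ^ n) := by
      filter_upwards [Filter.eventually_ge_atTop 1] with n hn
      have hL : x * q ^ (n - 1) ≤ gseq n * x ^ n * (n : ℝ) ^ 3 := gseq_lower x hx n hn
      have hqpos : 0 < q := by linarith
      have hqn : 0 < q ^ n := pow_pos hqpos n
      have hqn1 : q ^ (n - 1) ≠ 0 := pow_ne_zero _ (ne_of_gt hqpos)
      have e : q ^ n = q ^ (n - 1) * q := by
        rw [← pow_succ]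
        congr 1
        omega
      calc x / q = x * q ^ (n - 1) / q ^ n := by
            rw [e]; field_simp
        _ ≤ gseq n * x ^ n * (n : ℝ) ^ 3 / q ^ n := (div_le_div_iff_of_pos_right hqn).mpr hL
        _ = (gseq n * x ^ n) * ((n : ℝ) ^ 3 / q ^ n) := by ring
    have : x / q ≤ 0 := ge_of_tendsto hprod hev
    have : 0 < x / q := by positivity
    linarith
  · intro hle
    have hbound : ∀ n : ℕ, gseq n * x ^ n ≤ 27 / 64 * (1 / ((n : ℝ) + 1) ^ 2) := by
      intro n
      rcases Nat.eq_zero_or_pos n with h0 | h1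
      · subst h0
        norm_num [gseq]
      · have h1' : gseq n * (27 / 256) ^ n * ((n : ℝ) + 1) ^ 2 ≤ 27 / 64 := gseq_upper n h1
        have hnp : (0:ℝ) < ((n : ℝ) + 1) ^ 2 := by positivity
        have hxp : gseq n * x ^ n ≤ gseq n * (27 / 256) ^ n := by
          apply mul_le_mul_of_nonneg_left _ (gseq_nonneg n)
          exact pow_le_pow_left₀ hx hle n
        calc gseq n * x ^ n ≤ gseq n * (27 / 256) ^ n := hxp
          _ ≤ 27 / 64 * (1 / ((n : ℝ) + 1) ^ 2) := by
              rw [mul_one_div, le_div_iff₀ hnp]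
              exact h1'
    have hsummable : Summable (fun n : ℕ => 27 / 64 * (1 / ((n : ℝ) + 1) ^ 2)) := by
      apply Summable.mul_left
      have h2 : Summable (fun n : ℕ => 1 / (n : ℝ) ^ 2) :=
        Real.summable_one_div_nat_pow.mpr one_lt_two
      have := (summable_nat_add_iff 1).mpr h2
      apply this.congr
      intro n
      push_cast
      ring
    apply Summable.of_nonneg_of_le _ hbound hsummable
    intro n
    have := gseq_nonneg n
    positivity
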